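/- Let L, M, and i be natural numbers with i < L. Then the sum, over all functions f : Fin M → Fin (2^L), of the cardinality of {j : Fin M | (f j).val ≠ 0 and padicValNat 2 (f j).val = i} equals M * 2^(L-1-i) * (2^L)^(M-1). Consequently, if M values are hashed independently and uniformly into [0, 2^L - 1], the expected number of hash values whose least significant set bit is at position i equals M / 2^(i+1). -/

import Mathlib

open scoped Classical

lemma count_lssb (L i : ℕ) (hi : i < L) :
    (Finset.univ.filter (fun x : Fin (2 ^ L) => x.val ≠ 0 ∧ padicValNat 2 x.val = i)).card
      = 2 ^ (L - 1 - i) := by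
  have hexp : L - 1 - i + 1 = L - i := by omega
  have hbound : ∀ k : ℕ, k < 2 ^ (L - 1 - i) → 2 ^ i * (2 * k + 1) < 2 ^ L := by
    intro k hk
    have h1 : 2 * k + 1 < 2 ^ (L - i) := by
      have h2 : 2 * 2 ^ (L - 1 - i) = 2 ^ (L - i) := by rw [← pow_succ', hexp]
      omega
    calc 2 ^ i * (2 * k + 1) < 2 ^ i * 2 ^ (L - i) := by gcongr
      _ = 2 ^ L := by rw [← pow_add]; congr 1; omega
  have hval : ∀ k : ℕ, padicValNat 2 (2 ^ i * (2 * k + 1)) = i := by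
    intro k
    haveI : Fact (Nat.Prime 2) := ⟨Nat.prime_two⟩
    rw [padicValNat.mul (by positivity) (by omega), padicValNat.prime_pow,
      padicValNat.eq_zero_of_not_dvd (by omega)]
    omega
  rw [show (2 : ℕ) ^ (L - 1 - i) = (Finset.univ : Finset (Fin (2 ^ (L - 1 - i)))).card by
    simp]
  refine (Finset.card_bij
    (fun k _ => (⟨2 ^ i * (2 * k.val + 1), hbound k.val k.isLt⟩ : Fin (2 ^ L))) ?_ ?_ ?_).symm
  · intro k _
    simp only [Finset.mem_filter, Finset.mem_univ, true_and]
    exact ⟨by positivity, hval k.val⟩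
  · intro a _ b _ h
    have h' : 2 ^ i * (2 * a.val + 1) = 2 ^ i * (2 * b.val + 1) := congrArg Fin.val h
    have := Nat.eq_of_mul_eq_mul_left (by positivity) h'
    exact Fin.ext (by omega)
  · rintro x hx
    simp only [Finset.mem_filter, Finset.mem_univ, true_and] at hx
    obtain ⟨hx0, hxi⟩ := hx
    have hdvd : 2 ^ i ∣ x.val := hxi ▸ pow_padicValNat_dvd
    obtain ⟨m, hm⟩ := hdvd
    have hm0 : m ≠ 0 := by rintro rfl; simp at hm; exact hx0 (by simp [hm])
    have hmodd : ¬ 2 ∣ m := by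
      intro ⟨c, hc⟩
      have : 2 ^ (i + 1) ∣ x.val := ⟨c, by rw [hm, hc]; ring⟩
      exact pow_succ_padicValNat_not_dvd hx0 (hxi ▸ this)
    have hm2 : m % 2 = 1 := by omega
    have hklt : m / 2 < 2 ^ (L - 1 - i) := by
      have hxlt : x.val < 2 ^ L := x.isLt
      have hmlt : m < 2 ^ (L - i) := by
        have h3 : 2 ^ i * m < 2 ^ i * 2 ^ (L - i) := by
          rw [← hm, ← pow_add]
          have : i + (L - i) = L := by omega
          rw [this]; exact hxlt
        exact lt_of_mul_lt_mul_left h3 (Nat.zero_le _)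
      have h2 : 2 ^ (L - i) = 2 * 2 ^ (L - 1 - i) := by
        rw [← pow_succ']; congr 1; omega
      omega
    refine ⟨⟨m / 2, hklt⟩, Finset.mem_univ _, ?_⟩
    apply Fin.ext
    simp only
    rw [hm]
    congr 1
    omega

lemma sum_apply_count {M : ℕ} (j : Fin M) {α : Type*} [Fintype α] [DecidableEq α]
    (g : α → ℕ) :
    ∑ f : Fin M → α, g (f j) = (Fintype.card α) ^ (M - 1) * ∑ v, g v := by
  have hcard : Fintype.card ({k : Fin M // k ≠ j} → α) = (Fintype.card α) ^ (M - 1) := by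
    rw [Fintype.card_fun]
    congr 1
    rw [Fintype.card_subtype_compl, Fintype.card_subtype_eq, Fintype.card_fin]
  calc ∑ f : Fin M → α, g (f j)
      = ∑ p : α × ({k : Fin M // k ≠ j} → α), g p.1 :=
        Fintype.sum_equiv (Equiv.funSplitAt j α) _ _ (fun f => rfl)
    _ = (Fintype.card ({k : Fin M // k ≠ j} → α)) * ∑ v, g v := by
        rw [Fintype.sum_prod_type]
        simp only [Finset.sum_const, Finset.card_univ, smul_eq_mul]
        rw [Finset.mul_sum]
    _ = (Fintype.card α) ^ (M - 1) * ∑ v, g v := by rw [hcard]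

theorem expected_lssb_hits (L M i : ℕ) (hi : i < L) :
    (∑ f : Fin M → Fin (2 ^ L),
        (Finset.univ.filter
          (fun j : Fin M => (f j).val ≠ 0 ∧ padicValNat 2 (f j).val = i)).card)
      = M * 2 ^ (L - 1 - i) * (2 ^ L) ^ (M - 1) ∧
    ((∑ f : Fin M → Fin (2 ^ L),
        ((Finset.univ.filter
          (fun j : Fin M => (f j).val ≠ 0 ∧ padicValNat 2 (f j).val = i)).card : ℝ))
      / ((2 : ℝ) ^ L) ^ M) = (M : ℝ) / 2 ^ (i + 1) := by
  have key : (∑ f : Fin M → Fin (2 ^ L),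
      (Finset.univ.filter
        (fun j : Fin M => (f j).val ≠ 0 ∧ padicValNat 2 (f j).val = i)).card)
      = M * 2 ^ (L - 1 - i) * (2 ^ L) ^ (M - 1) := by
    calc (∑ f : Fin M → Fin (2 ^ L),
        (Finset.univ.filter
          (fun j : Fin M => (f j).val ≠ 0 ∧ padicValNat 2 (f j).val = i)).card)
        = ∑ f : Fin M → Fin (2 ^ L), ∑ j : Fin M,
            (if (f j).val ≠ 0 ∧ padicValNat 2 (f j).val = i then 1 else 0) := by
          simp only [Finset.card_filter]
      _ = ∑ j : Fin M, ∑ f : Fin M → Fin (2 ^ L),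
            (if (f j).val ≠ 0 ∧ padicValNat 2 (f j).val = i then 1 else 0) :=
          Finset.sum_comm
      _ = ∑ j : Fin M, (Fintype.card (Fin (2 ^ L))) ^ (M - 1) *
            ∑ v : Fin (2 ^ L), (if v.val ≠ 0 ∧ padicValNat 2 v.val = i then 1 else 0) := by
          refine Finset.sum_congr rfl fun j _ => ?_
          exact sum_apply_count j
            (fun v : Fin (2 ^ L) => if v.val ≠ 0 ∧ padicValNat 2 v.val = i then 1 else 0)
      _ = M * 2 ^ (L - 1 - i) * (2 ^ L) ^ (M - 1) := by
          have h1 : (∑ v : Fin (2 ^ L),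
              (if v.val ≠ 0 ∧ padicValNat 2 v.val = i then 1 else 0))
              = 2 ^ (L - 1 - i) := by
            rw [← count_lssb L i hi, Finset.card_filter]
          rw [h1, Fintype.card_fin, Finset.sum_const, Finset.card_univ, Fintype.card_fin]
          ring
  refine ⟨key, ?_⟩
  rcases Nat.eq_zero_or_pos M with hM | hM
  · subst hM; simp
  have hc := congrArg (Nat.cast : ℕ → ℝ) key
  push_cast at hc
  rw [hc]
  clear hc key
  have hML : (((2 : ℝ) ^ L) ^ M) = ((2 : ℝ) ^ L) ^ (M - 1) * 2 ^ L := by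
    rw [← pow_succ, Nat.sub_add_cancel hM]
  rw [hML]
  have hB0 : ((2 : ℝ) ^ L) ^ (M - 1) ≠ 0 := by positivity
  have hLsplit : (2 : ℝ) ^ L = 2 ^ (L - 1 - i) * 2 ^ (i + 1) := by
    have hE : L - 1 - i + (i + 1) = L := by omega
    conv_lhs => rw [← hE]
    rw [pow_add]
  set B := ((2 : ℝ) ^ L) ^ (M - 1) with hB
  rw [hLsplit]
  field_simp
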